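/- In the bipartite influence model with valuation f(X) = γ Σ_{w∈W} Q(X,w), if q(e) ≤ q for every edge e and every right vertex w ∈ W has degree at most d, then for any X ⊆ V with |X| = s, any x ∈ X, and any w with (x,w) ∈ E, we have Q(X \ {x}, w) ≤ 1 - (1 - q)^{min{s,d} - 1}. Consequently the curvature satisfies κ(s) ≤ 1 - (1 - q)^{min{s,d} - 1}. -/

import Mathlib

/-- Theorem 3: if all activation probabilities are at most q̄ and right degrees
are at most d, then Q(X \ x, w) ≤ 1 - (1-q̄)^{min(s,d)-1} and hence
κ(s) ≤ 1 - (1-q̄)^{min(s,d)-1}. -/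
theorem stmt4 {V W : Type*} [DecidableEq V] [DecidableEq W] [Fintype V] [Fintype W]
    (E : Finset (V × W)) (q : V × W → ℝ) (γ : ℝ) (hγ : 0 < γ)
    (qbar : ℝ) (hqbar0 : 0 ≤ qbar) (hqbar1 : qbar ≤ 1)
    (hq : ∀ e ∈ E, 0 ≤ q e ∧ q e ≤ qbar)
    (d : ℕ)
    (hdeg : ∀ w : W, (Finset.univ.filter (fun v : V => (v, w) ∈ E)).card ≤ d)
    (Q : Finset V → W → ℝ)
    (hQ : ∀ (X : Finset V) (w : W),
      Q X w = 1 - ∏ x ∈ X.filter (fun x => (x, w) ∈ E), (1 - q (x, w)))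
    (f : Finset V → ℝ)
    (hf : ∀ X : Finset V, f X = γ * ∑ w : W, Q X w)
    (hpos : ∀ x : V, 0 < f {x})
    (s : ℕ) (hs1 : 1 ≤ s) (hs2 : s ≤ Fintype.card V)
    (κ : ℕ → ℝ)
    (hκ : ∀ t : ℕ, κ t = 1 - sInf {r : ℝ | ∃ (X : Finset V) (x : V),
        X.card = t ∧ x ∈ X ∧ r = (f X - f (X.erase x)) / f {x}}) :
    (∀ (X : Finset V) (x : V) (w : W), X.card = s → x ∈ X → (x, w) ∈ E →
        Q (X.erase x) w ≤ 1 - (1 - qbar) ^ (min s d - 1)) ∧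
    κ s ≤ 1 - (1 - qbar) ^ (min s d - 1) := by
  set c : ℝ := (1 - qbar) ^ (min s d - 1) with hc
  have h1q : (0:ℝ) ≤ 1 - qbar := by linarith
  have h1q1 : (1:ℝ) - qbar ≤ 1 := by linarith
  have hc0 : 0 ≤ c := pow_nonneg h1q _
  -- key product bound
  have key : ∀ (X : Finset V) (x : V) (w : W), X.card = s → x ∈ X → (x, w) ∈ E →
      c ≤ ∏ v ∈ (X.erase x).filter (fun v => (v, w) ∈ E), (1 - q (v, w)) := by
    intro X x w hX hx hxe
    set T := (X.erase x).filter (fun v => (v, w) ∈ E) with hT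
    have hTcard : T.card ≤ min s d - 1 := by
      have h1 : T.card ≤ s - 1 := by
        calc T.card ≤ (X.erase x).card := Finset.card_filter_le _ _
        _ = s - 1 := by rw [Finset.card_erase_of_mem hx, hX]
      have h2 : T.card ≤ d - 1 := by
        have hsub : T ⊆ (Finset.univ.filter (fun v : V => (v, w) ∈ E)).erase x := by
          intro v hv
          simp only [hT, Finset.mem_filter, Finset.mem_erase] at hv ⊢
          exact ⟨hv.1.1, ⟨Finset.mem_univ v, hv.2⟩⟩
        have hcle := Finset.card_le_card hsub
        rw [Finset.card_erase_of_mem (by simp [hxe])] at hcle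
        have := hdeg w
        omega
      omega
    calc c = (1 - qbar) ^ (min s d - 1) := rfl
    _ ≤ (1 - qbar) ^ T.card := pow_le_pow_of_le_one h1q h1q1 hTcard
    _ = ∏ _v ∈ T, (1 - qbar) := by rw [Finset.prod_const]
    _ ≤ ∏ v ∈ T, (1 - q (v, w)) := by
        refine Finset.prod_le_prod (fun i _ => h1q) (fun i hi => ?_)
        have := (hq (i, w) (Finset.mem_filter.1 hi).2).2
        linarith
  have part1 : ∀ (X : Finset V) (x : V) (w : W), X.card = s → x ∈ X → (x, w) ∈ E →
      Q (X.erase x) w ≤ 1 - c := by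
    intro X x w hX hx he
    rw [hQ]
    linarith [key X x w hX hx he]
  refine ⟨part1, ?_⟩
  -- per-w marginal inequality
  have hw : ∀ (X : Finset V) (x : V), X.card = s → x ∈ X → ∀ w : W,
      c * Q {x} w ≤ Q X w - Q (X.erase x) w := by
    intro X x hX hx w
    rw [hQ, hQ, hQ]
    by_cases he : (x, w) ∈ E
    · have hq0 := (hq _ he).1
      have hfx : ({x} : Finset V).filter (fun v => (v, w) ∈ E) = {x} := by
        simp [Finset.filter_singleton, he]
      rw [hfx, Finset.prod_singleton]
      have hxmem : x ∈ X.filter (fun v => (v, w) ∈ E) := Finset.mem_filter.2 ⟨hx, he⟩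
      rw [← Finset.mul_prod_erase _ _ hxmem, ← Finset.filter_erase]
      have hP := key X x w hX hx he
      nlinarith [hP, hc0, hq0]
    · have hfx : ({x} : Finset V).filter (fun v => (v, w) ∈ E) = ∅ := by
        simp [Finset.filter_singleton, he]
      have hfe : (X.erase x).filter (fun v => (v, w) ∈ E)
          = X.filter (fun v => (v, w) ∈ E) := by
        rw [Finset.filter_erase, Finset.erase_eq_of_notMem (by simp [he])]
      rw [hfx, hfe]
      simp
  set S : Set ℝ := {r : ℝ | ∃ (X : Finset V) (x : V),
      X.card = s ∧ x ∈ X ∧ r = (f X - f (X.erase x)) / f {x}} with hS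
  have hSne : S.Nonempty := by
    obtain ⟨X, _, hXcard⟩ := Finset.exists_subset_card_eq (s := Finset.univ) (n := s) (by simpa using hs2)
    have hne : X.Nonempty := by rw [← Finset.card_pos, hXcard]; omega
    obtain ⟨x, hx⟩ := hne
    exact ⟨_, X, x, hXcard, hx, rfl⟩
  have hlb : ∀ r ∈ S, c ≤ r := by
    rintro r ⟨X, x, hX, hx, rfl⟩
    have hfx := hpos x
    rw [le_div_iff₀ hfx, hf, hf, hf]
    have hsum : ∑ w : W, c * Q {x} w ≤ ∑ w : W, (Q X w - Q (X.erase x) w) :=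
      Finset.sum_le_sum (fun w _ => hw X x hX hx w)
    rw [← Finset.mul_sum, Finset.sum_sub_distrib] at hsum
    nlinarith [hsum, hγ]
  rw [hκ]
  have := le_csInf hSne hlb
  linarith
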